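/- The function l ↦ √(2/π)·t·e^{-l²/(2t²)} - 2|l|·(1 - Φ(|l|/t)) is nonnegative and nonincreasing in |l| for every fixed t > 0, where Φ is the standard Gaussian CDF. -/

import Mathlib

open MeasureTheory Real

/-- Standard Gaussian cumulative distribution function. -/
noncomputable def Phi (t : ℝ) : ℝ := ∫ x in Set.Iic t, Real.exp (-x ^ 2 / 2) / Real.sqrt (2 * Real.pi)

noncomputable def phiPDF (x : ℝ) : ℝ := Real.exp (-x ^ 2 / 2) / Real.sqrt (2 * Real.pi)

lemma phiPDF_nonneg (x : ℝ) : 0 ≤ phiPDF x := by unfold phiPDF; positivity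

lemma exp_form (x : ℝ) : Real.exp (-x ^ 2 / 2) = Real.exp (-(1/2) * x ^ 2) := by ring_nf

lemma integrable_gauss : Integrable (fun x : ℝ => Real.exp (-x ^ 2 / 2)) := by
  have := integrable_exp_neg_mul_sq (b := 1/2) (by norm_num)
  simpa [exp_form] using this

lemma integrable_phiPDF : Integrable phiPDF := by
  unfold phiPDF; exact integrable_gauss.div_const _

lemma integral_gauss_total : ∫ x : ℝ, Real.exp (-x ^ 2 / 2) = Real.sqrt (2 * Real.pi) := by
  have := integral_gaussian (1/2)
  simp_rw [← exp_form] at this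
  rw [this]
  norm_num [mul_comm]

lemma sqrt2pi_pos : (0:ℝ) < Real.sqrt (2 * Real.pi) := Real.sqrt_pos.2 (by positivity)

lemma integral_phiPDF_total : ∫ x : ℝ, phiPDF x = 1 := by
  unfold phiPDF
  rw [integral_div, integral_gauss_total, div_self sqrt2pi_pos.ne']

lemma tail_eq (x : ℝ) : 1 - Phi x = ∫ u in Set.Ioi x, phiPDF u := by
  have := intervalIntegral.integral_Iic_add_Ioi (b := x) (f := phiPDF) (μ := volume)
    integrable_phiPDF.integrableOn integrable_phiPDF.integrableOn
  rw [integral_phiPDF_total] at this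
  have hPhi : Phi x = ∫ u in Set.Iic x, phiPDF u := rfl
  linarith

lemma tail_nonneg (x : ℝ) : 0 ≤ 1 - Phi x := by
  rw [tail_eq]
  exact setIntegral_nonneg measurableSet_Ioi (fun u _ => phiPDF_nonneg u)

lemma sqrt_two_div_pi : Real.sqrt (2 / Real.pi) * Real.sqrt (2 * Real.pi) = 2 := by
  rw [← Real.sqrt_mul (by positivity)]
  have : 2 / Real.pi * (2 * Real.pi) = 4 := by
    field_simp
    ring
  rw [this, show (4:ℝ) = 2 ^ 2 by norm_num, Real.sqrt_sq (by norm_num)]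

lemma sqrt_repr : Real.sqrt (2 / Real.pi) = 2 / Real.sqrt (2 * Real.pi) :=
  eq_div_of_mul_eq sqrt2pi_pos.ne' sqrt_two_div_pi

lemma integrable_mul_gauss : Integrable (fun u : ℝ => u * Real.exp (-u ^ 2 / 2)) := by
  have := integrable_mul_exp_neg_mul_sq (b := 1/2) (by norm_num)
  simpa [exp_form] using this

lemma integral_mul_gauss_Ioi (x : ℝ) :
    ∫ u in Set.Ioi x, u * Real.exp (-u ^ 2 / 2) = Real.exp (-x ^ 2 / 2) := by
  have hderiv : ∀ u ∈ Set.Ici x, HasDerivAt (fun u : ℝ => -Real.exp (-u ^ 2 / 2))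
      (u * Real.exp (-u ^ 2 / 2)) u := by
    intro u _
    have h1 : HasDerivAt (fun u : ℝ => -u ^ 2 / 2) (-u) u := by
      have := ((hasDerivAt_pow 2 u).neg.div_const 2)
      simpa using this.congr_deriv (by ring)
    have := (h1.exp).neg
    exact this.congr_deriv (by ring)
  have htend : Filter.Tendsto (fun u : ℝ => -Real.exp (-u ^ 2 / 2)) Filter.atTop (nhds 0) := by
    rw [show (0:ℝ) = -0 by norm_num]
    apply Filter.Tendsto.neg
    apply Real.tendsto_exp_atBot.comp
    apply Filter.Tendsto.atBot_div_const (by norm_num : (0:ℝ) < 2)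
    exact Filter.tendsto_neg_atTop_atBot.comp (Filter.tendsto_pow_atTop (by norm_num))
  have := integral_Ioi_of_hasDerivAt_of_tendsto' hderiv integrable_mul_gauss.integrableOn htend
  rw [this]; ring

lemma mills (x : ℝ) (hx : 0 < x) :
    (∫ u in Set.Ioi x, phiPDF u) ≤ phiPDF x / x := by
  have hptwise : ∀ u : ℝ, (u / x) * phiPDF u
      = (u * Real.exp (-u ^ 2 / 2)) * ((Real.sqrt (2 * Real.pi))⁻¹ / x) := by
    intro u; simp only [phiPDF, div_eq_mul_inv]; ring
  have hmono : (∫ u in Set.Ioi x, phiPDF u) ≤ ∫ u in Set.Ioi x, (u / x) * phiPDF u := by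
    apply setIntegral_mono_on integrable_phiPDF.integrableOn
    · have := (integrable_mul_gauss.mul_const
        ((Real.sqrt (2 * Real.pi))⁻¹ / x)).integrableOn (s := Set.Ioi x)
      apply this.congr_fun _ measurableSet_Ioi
      intro u _
      exact (hptwise u).symm
    · exact measurableSet_Ioi
    · intro u hu
      have h1 : (1:ℝ) ≤ u / x := (one_le_div hx).2 (le_of_lt hu)
      exact le_mul_of_one_le_left (phiPDF_nonneg u) h1
  have heq : ∫ u in Set.Ioi x, (u / x) * phiPDF u = phiPDF x / x := by
    simp_rw [hptwise]
    rw [integral_mul_const, integral_mul_gauss_Ioi]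
    simp only [phiPDF, div_eq_mul_inv]
    ring
  rw [heq] at hmono
  exact hmono

lemma phi_cont : Continuous phiPDF := by
  apply Continuous.div_const
  exact Real.continuous_exp.comp (by continuity)

lemma hasDerivAt_Phi (x : ℝ) : HasDerivAt Phi (phiPDF x) x := by
  have key : ∀ y : ℝ, Phi y = (∫ u in (0:ℝ)..y, phiPDF u) + Phi 0 := by
    intro y
    have := intervalIntegral.integral_Iic_sub_Iic (f := phiPDF) (μ := volume) (a := (0:ℝ)) (b := y)
      integrable_phiPDF.integrableOn integrable_phiPDF.integrableOn
    have hPhi : ∀ z : ℝ, Phi z = ∫ u in Set.Iic z, phiPDF u := fun z => rfl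
    rw [← hPhi y, ← hPhi 0] at this
    linarith
  have hD : HasDerivAt (fun y => (∫ u in (0:ℝ)..y, phiPDF u) + Phi 0) (phiPDF x) x := by
    apply HasDerivAt.add_const
    exact intervalIntegral.integral_hasDerivAt_right
      integrable_phiPDF.intervalIntegrable
      (phi_cont.stronglyMeasurableAtFilter _ _)
      phi_cont.continuousAt
  exact hD.congr_of_eventuallyEq (Filter.Eventually.of_forall key)

section main

variable (t : ℝ)

noncomputable def gFun (t : ℝ) (a : ℝ) : ℝ :=
  Real.sqrt (2 / Real.pi) * t * Real.exp (-a ^ 2 / (2 * t ^ 2)) - 2 * a * (1 - Phi (a / t))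

lemma exp_eq (a : ℝ) (ht : 0 < t) :
    Real.exp (-(a / t) ^ 2 / 2) = Real.exp (-a ^ 2 / (2 * t ^ 2)) := by
  have ht' : t ≠ 0 := ht.ne'
  congr 1
  rw [div_pow, neg_div, neg_div, div_div]
  rw [mul_comm (t ^ 2) 2]

lemma hasDerivAt_g (ht : 0 < t) (a : ℝ) :
    HasDerivAt (gFun t) (-2 * (1 - Phi (a / t))) a := by
  have h1 : HasDerivAt (fun a : ℝ => Real.sqrt (2 / Real.pi) * t * Real.exp (-a ^ 2 / (2 * t ^ 2)))
      (Real.sqrt (2 / Real.pi) * t * Real.exp (-a ^ 2 / (2 * t ^ 2)) * (-a / t ^ 2)) a := by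
    have hinner : HasDerivAt (fun a : ℝ => -a ^ 2 / (2 * t ^ 2)) (-a / t ^ 2) a := by
      have := ((hasDerivAt_pow 2 a).neg.div_const (2 * t ^ 2))
      apply this.congr_deriv
      field_simp
      ring
    have := (hinner.exp).const_mul (Real.sqrt (2 / Real.pi) * t)
    exact this.congr_deriv (by ring)
  have h2 : HasDerivAt (fun a : ℝ => 2 * a * (1 - Phi (a / t)))
      (2 * (1 - Phi (a / t)) + 2 * a * (-(phiPDF (a / t) / t))) a := by
    have hP : HasDerivAt (fun a : ℝ => Phi (a / t)) (phiPDF (a / t) / t) a := by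
      have := (hasDerivAt_Phi (a / t)).comp a ((hasDerivAt_id a).div_const t)
      exact this.congr_deriv (by ring)
    have hlin : HasDerivAt (fun a : ℝ => 2 * a) 2 a := by
      simpa using (hasDerivAt_id a).const_mul 2
    have := hlin.mul ((hasDerivAt_const a (1:ℝ)).sub hP)
    apply this.congr_deriv
    simp only [Pi.sub_apply]
    ring
  have := h1.sub h2
  apply this.congr_deriv
  have key : Real.sqrt (2 / Real.pi) * t * Real.exp (-a ^ 2 / (2 * t ^ 2)) * (-a / t ^ 2)
      = -(2 * a * (phiPDF (a / t) / t)) := by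
    simp only [phiPDF, exp_eq t a ht, sqrt_repr]
    set s := Real.sqrt (2 * Real.pi) with hs
    set E := Real.exp (-a ^ 2 / (2 * t ^ 2)) with hE
    have hsne : s ≠ 0 := sqrt2pi_pos.ne'
    field_simp
  rw [key]
  ring

lemma g_antitone (ht : 0 < t) : Antitone (gFun t) := by
  have hdiff : Differentiable ℝ (gFun t) := fun a => (hasDerivAt_g t ht a).differentiableAt
  apply antitone_of_deriv_nonpos hdiff
  intro a
  rw [(hasDerivAt_g t ht a).deriv]
  have := tail_nonneg (a / t)
  nlinarith

lemma g_nonneg (ht : 0 < t) (a : ℝ) (ha : 0 ≤ a) : 0 ≤ gFun t a := by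
  rcases eq_or_lt_of_le ha with h | h
  · subst h
    simp only [gFun]
    norm_num
    positivity
  · have hx : 0 < a / t := div_pos h ht
    have hm := mills (a / t) hx
    rw [gFun, sub_nonneg, tail_eq]
    calc 2 * a * (∫ u in Set.Ioi (a / t), phiPDF u)
        ≤ 2 * a * (phiPDF (a / t) / (a / t)) :=
          mul_le_mul_of_nonneg_left hm (by linarith)
      _ = Real.sqrt (2 / Real.pi) * t * Real.exp (-a ^ 2 / (2 * t ^ 2)) := by
          simp only [phiPDF, exp_eq t a ht, sqrt_repr]
          set s := Real.sqrt (2 * Real.pi) with hs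
          set E := Real.exp (-a ^ 2 / (2 * t ^ 2)) with hE
          have hsne : s ≠ 0 := sqrt2pi_pos.ne'
          field_simp

end main

/-- The function `g(a) = √(2/π)·t·e^{-a²/(2t²)} - 2a·(1-Φ(a/t))` is nonnegative and
nonincreasing for `a ≥ 0`, for every fixed `t > 0`. -/
theorem stmt_1 (t : ℝ) (ht : 0 < t) :
    (∀ a : ℝ, 0 ≤ a →
        0 ≤ Real.sqrt (2 / Real.pi) * t * Real.exp (-a ^ 2 / (2 * t ^ 2))
            - 2 * a * (1 - Phi (a / t))) ∧
    (∀ a b : ℝ, 0 ≤ a → a ≤ b →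
        Real.sqrt (2 / Real.pi) * t * Real.exp (-b ^ 2 / (2 * t ^ 2))
            - 2 * b * (1 - Phi (b / t)) ≤
          Real.sqrt (2 / Real.pi) * t * Real.exp (-a ^ 2 / (2 * t ^ 2))
            - 2 * a * (1 - Phi (a / t))) := by
  exact ⟨fun a ha => g_nonneg t ht a ha, fun a b _ hab => g_antitone t ht hab⟩
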